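/- Let k ≥ 2 and let G be a (P₃ ∪ kP₁)-free graph and S ⊆ V(G). If G−S has exactly k connected components and some component of G−S is noncomplete, then that noncomplete component is (P₃ ∪ P₁)-free. -/
import Mathlib


open SimpleGraph

variable {V : Type*} {α : Type*}

/-- The graph `G − S` obtained by deleting the vertices of `S`. -/
abbrev GDel (G : SimpleGraph V) (S : Set V) : SimpleGraph (Sᶜ : Set V) :=
  G.induce (Sᶜ : Set V)

/-- `w(G − S)`: the number of connected components of `G − S`. -/
noncomputable def numComp (G : SimpleGraph V) (S : Set V) : ℕ :=
  Nat.card (GDel G S).ConnectedComponent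

/-- `S` is a cutset of `G`: deleting `S` disconnects the graph. -/
def IsCutset (G : SimpleGraph V) (S : Set V) : Prop :=
  ¬ (GDel G S).Preconnected

/-- `G` is `t`-tough. -/
def Tough (t : ℝ) (G : SimpleGraph V) : Prop :=
  ∀ S : Set V, IsCutset G S → t * numComp G S ≤ S.ncard

open Classical in
/-- The vertex connectivity of `G`. -/
noncomputable def kappa [Fintype V] (G : SimpleGraph V) : ℕ :=
  if ∃ S : Set V, IsCutset G S then
    sInf {n | ∃ S : Set V, S.ncard = n ∧ IsCutset G S}
  else Fintype.card V - 1

/-- The independence number of `G`. -/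
noncomputable def indepNum [Fintype V] (G : SimpleGraph V) : ℕ :=
  sSup {n | ∃ T : Set V, T.ncard = n ∧ ∀ u ∈ T, ∀ v ∈ T, u ≠ v → ¬ G.Adj u v}

/-- The toughness of `G` (as a real number; meaningful for noncomplete graphs). -/
noncomputable def toughness [Fintype V] (G : SimpleGraph V) : ℝ :=
  sInf {r : ℝ | ∃ S : Set V, IsCutset G S ∧ r = S.ncard / numComp G S}

/-- The graph `P₃ ∪ kP₁`. -/
def P3kP1 (k : ℕ) : SimpleGraph (Fin 3 ⊕ Fin k) :=
  SimpleGraph.fromRel (fun x y =>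
    (x = Sum.inl 0 ∧ y = Sum.inl 1) ∨ (x = Sum.inl 1 ∧ y = Sum.inl 2))

/-- `G` contains no induced copy of `H`. -/
def IndFree (H : SimpleGraph α) (G : SimpleGraph V) : Prop :=
  ¬ ∃ f : α ↪ V, ∀ a b, H.Adj a b ↔ G.Adj (f a) (f b)

/-- A connected component of `G − S` is complete (its vertices form a clique in `G`). -/
def CompComplete (G : SimpleGraph V) (S : Set V)
    (C : (GDel G S).ConnectedComponent) : Prop :=
  ∀ u v : (Sᶜ : Set V), u ∈ C.supp → v ∈ C.supp → (u : V) ≠ v → G.Adj u v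

/-- The vertex set of `G` can be covered by at most `n` pairwise disjoint paths. -/
def PathCover (G : SimpleGraph V) (n : ℕ) : Prop :=
  ∃ k : ℕ, k ≤ n ∧ ∃ P : Fin k → Σ u : V, Σ v : V, G.Walk u v,
    (∀ i, (P i).2.2.IsPath) ∧
    (∀ i j, i ≠ j → ∀ x, x ∈ (P i).2.2.support → x ∉ (P j).2.2.support) ∧
    (∀ x : V, ∃ i, x ∈ (P i).2.2.support)



lemma aux_adj_inl_iff (k : ℕ) (a b : Fin 3) :
    (P3kP1 k).Adj (Sum.inl a) (Sum.inl b) ↔ (P3kP1 1).Adj (Sum.inl a) (Sum.inl b) := by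
  simp [P3kP1]

lemma aux_not_adj_inr (k : ℕ) (x : Fin 3 ⊕ Fin k) (j : Fin k) :
    ¬ (P3kP1 k).Adj x (Sum.inr j) := by
  simp [P3kP1]

/-- If `G` is `(P₃ ∪ kP₁)`-free (`k ≥ 2`) and `G − S` has exactly `k` components,
then any noncomplete component of `G − S` is `(P₃ ∪ P₁)`-free. -/
theorem stmt_3 {V : Type*} [Fintype V] (k : ℕ) (hk : 2 ≤ k) (G : SimpleGraph V)
    (hfree : IndFree (P3kP1 k) G) (S : Set V) (hw : numComp G S = k)
    (C : (GDel G S).ConnectedComponent) (hC : ¬ CompComplete G S C) :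
    IndFree (P3kP1 1) (G.induce (Subtype.val '' C.supp)) := by
  classical
  rintro ⟨f, hf⟩
  haveI : NeZero k := ⟨by omega⟩
  have hlift : ∀ x : (Subtype.val '' C.supp : Set V), ∃ y : (Sᶜ : Set V),
      y ∈ C.supp ∧ (y : V) = (x : V) := by
    rintro ⟨x, y, hy, rfl⟩
    exact ⟨y, hy, rfl⟩
  choose g hg1 hg2 using hlift
  have hgC : ∀ x, (GDel G S).connectedComponentMk (g x) = C :=
    fun x => (SimpleGraph.ConnectedComponent.mem_supp_iff _ _).1 (hg1 x)
  unfold numComp at hw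
  haveI hfin : Finite ((GDel G S).ConnectedComponent) :=
    Nat.finite_of_card_ne_zero (by omega)
  haveI := Fintype.ofFinite ((GDel G S).ConnectedComponent)
  have hcard : Nat.card {D : (GDel G S).ConnectedComponent // D ≠ C} = k - 1 := by
    have h1 : Fintype.card {D : (GDel G S).ConnectedComponent // D = C} = 1 :=
      Fintype.card_subtype_eq C
    have h2 := Fintype.card_subtype_compl (fun D : (GDel G S).ConnectedComponent => D = C)
    rw [Nat.card_eq_fintype_card] at hw ⊢
    rw [h2, h1, hw]
  have e := Finite.equivFinOfCardEq hcard
  choose out hout using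
    (fun D : (GDel G S).ConnectedComponent => D.exists_rep)
  have hidx : ∀ j : Fin k, j ≠ 0 → (j : ℕ) - 1 < k - 1 := by
    intro j hj
    have h1 := j.isLt
    have h2 : (j : ℕ) ≠ 0 := by
      intro hc; exact hj (Fin.ext hc)
    omega
  set D2 : ∀ j : Fin k, j ≠ 0 → {D : (GDel G S).ConnectedComponent // D ≠ C} :=
    fun j hj => e.symm ⟨(j : ℕ) - 1, hidx j hj⟩ with hD2
  set u : Fin 3 ⊕ Fin k → (Sᶜ : Set V) :=
    Sum.elim (fun i => g (f (Sum.inl i)))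
      (fun j => if hj : j = 0 then g (f (Sum.inr 0)) else out (D2 j hj).1) with hu
  have hcompL : ∀ i : Fin 3, (GDel G S).connectedComponentMk (u (Sum.inl i)) = C := by
    intro i; simp only [hu, Sum.elim_inl]; exact hgC _
  have hcomp0 : (GDel G S).connectedComponentMk (u (Sum.inr 0)) = C := by
    simp only [hu, Sum.elim_inr, dif_pos rfl]; exact hgC _
  have hcompR : ∀ (j : Fin k) (hj : j ≠ 0),
      (GDel G S).connectedComponentMk (u (Sum.inr j)) = (D2 j hj).1 := by
    intro j hj; simp only [hu, Sum.elim_inr, dif_neg hj]; exact hout _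
  have hnadj : ∀ a b : (Sᶜ : Set V),
      (GDel G S).connectedComponentMk a ≠ (GDel G S).connectedComponentMk b →
      ¬ G.Adj (a : V) (b : V) := by
    intro a b hne hadj
    exact hne (SimpleGraph.ConnectedComponent.sound
      (SimpleGraph.Adj.reachable (show (GDel G S).Adj a b from hadj)))
  have hR2 : ∀ (j j' : Fin k) (hj : j ≠ 0) (hj' : j' ≠ 0), j ≠ j' →
      (D2 j hj).1 ≠ (D2 j' hj').1 := by
    intro j j' hj hj' hjj hc
    have h3 := e.symm.injective (Subtype.ext hc)
    have h4 : (j : ℕ) - 1 = (j' : ℕ) - 1 := by simpa [hD2, Fin.ext_iff] using h3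
    have h5 : (j : ℕ) ≠ 0 := fun hcc => hj (Fin.ext hcc)
    have h6 : (j' : ℕ) ≠ 0 := fun hcc => hj' (Fin.ext hcc)
    exact hjj (Fin.ext (by omega))
  -- no adjacency between an inl-vertex and an inr-vertex
  have hmix : ∀ (a : Fin 3) (j : Fin k),
      ¬ G.Adj ((u (Sum.inl a)) : V) ((u (Sum.inr j)) : V) := by
    intro a j
    by_cases hj : j = 0
    · subst hj
      intro hadj
      have hadj' : (G.induce (Subtype.val '' C.supp)).Adj (f (Sum.inl a)) (f (Sum.inr 0)) := by
        show G.Adj ((f (Sum.inl a)) : V) ((f (Sum.inr 0)) : V)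
        rw [← hg2 (f (Sum.inl a)), ← hg2 (f (Sum.inr 0))]
        simpa [hu] using hadj
      exact aux_not_adj_inr 1 (Sum.inl a) 0 ((hf _ _).2 hadj')
    · exact hnadj _ _ (by rw [hcompL, hcompR j hj]; exact ((D2 j hj).2).symm)
  -- injectivity
  have hinj : Function.Injective (fun x => ((u x : (Sᶜ : Set V)) : V)) := by
    intro x y hxy
    simp only at hxy
    have hcmp : (GDel G S).connectedComponentMk (u x) = (GDel G S).connectedComponentMk (u y) := by
      rw [Subtype.ext hxy]
    match x, y with
    | Sum.inl a, Sum.inl b =>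
      have h1 : ((f (Sum.inl a) : V)) = ((f (Sum.inl b) : V)) := by
        rw [← hg2 (f (Sum.inl a)), ← hg2 (f (Sum.inl b))]; exact hxy
      have h2 := f.injective (Subtype.ext h1)
      simpa using h2
    | Sum.inl a, Sum.inr j =>
      by_cases hj : j = 0
      · subst hj
        have h1 : ((f (Sum.inl a) : V)) = ((f (Sum.inr 0) : V)) := by
          rw [← hg2 (f (Sum.inl a)), ← hg2 (f (Sum.inr 0))]
          simpa [hu] using hxy
        exact absurd (f.injective (Subtype.ext h1)) (by simp)
      · exact absurd hcmp (by rw [hcompL, hcompR j hj]; exact ((D2 j hj).2).symm)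
    | Sum.inr j, Sum.inl a =>
      by_cases hj : j = 0
      · subst hj
        have h1 : ((f (Sum.inr 0) : V)) = ((f (Sum.inl a) : V)) := by
          rw [← hg2 (f (Sum.inr 0)), ← hg2 (f (Sum.inl a))]
          simpa [hu] using hxy
        exact absurd (f.injective (Subtype.ext h1)) (by simp)
      · exact absurd hcmp (by rw [hcompL, hcompR j hj]; exact (D2 j hj).2)
    | Sum.inr j, Sum.inr j' =>
      by_cases hj : j = 0 <;> by_cases hj' : j' = 0
      · rw [hj, hj']
      · subst hj
        exact absurd hcmp (by rw [hcomp0, hcompR j' hj']; exact ((D2 j' hj').2).symm)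
      · subst hj'
        exact absurd hcmp (by rw [hcompR j hj, hcomp0]; exact (D2 j hj).2)
      · have h1 : (D2 j hj).1 = (D2 j' hj').1 := by
          rw [← hcompR j hj, ← hcompR j' hj']; exact hcmp
        by_cases hjj : j = j'
        · rw [hjj]
        · exact absurd h1 (hR2 j j' hj hj' hjj)
  refine hfree ⟨⟨fun x => ((u x : (Sᶜ : Set V)) : V), hinj⟩, ?_⟩
  intro x y
  show (P3kP1 k).Adj x y ↔ G.Adj ((u x) : V) ((u y) : V)
  match x, y with
  | Sum.inl a, Sum.inl b =>
    rw [aux_adj_inl_iff, hf]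
    show G.Adj ((f (Sum.inl a)) : V) ((f (Sum.inl b)) : V) ↔ _
    rw [← hg2 (f (Sum.inl a)), ← hg2 (f (Sum.inl b))]
    simp [hu]
  | Sum.inl a, Sum.inr j =>
    simp only [aux_not_adj_inr k (Sum.inl a) j, false_iff]
    exact hmix a j
  | Sum.inr j, Sum.inl a =>
    constructor
    · intro h; exact absurd h.symm (aux_not_adj_inr k (Sum.inl a) j)
    · intro h; exact absurd h.symm (hmix a j)
  | Sum.inr j, Sum.inr j' =>
    simp only [aux_not_adj_inr k (Sum.inr j) j', false_iff]
    by_cases hjj : j = j'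
    · subst hjj; exact fun h => G.irrefl h
    · by_cases hj : j = 0 <;> by_cases hj' : j' = 0
      · exact absurd (hj.trans hj'.symm) hjj
      · subst hj
        exact hnadj _ _ (by rw [hcomp0, hcompR j' hj']; exact ((D2 j' hj').2).symm)
      · subst hj'
        exact hnadj _ _ (by rw [hcompR j hj, hcomp0]; exact (D2 j hj).2)
      · exact hnadj _ _ (by rw [hcompR j hj, hcompR j' hj']; exact hR2 j j' hj hj' hjj)
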